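/- There exists an absolute constant c > 0 such that for every ε ∈ (0,1], every r ≥ 1 and every s′ ∈ [0, 1/2], one has (1/(√2·π)) · r · ∫_{−1}^{1} e^{s′·r·x}/√(cosh r − cosh(r·x)) dx ≥ c·√ε·e^{−r·(1/2 − s′·(1−ε))}. -/

import Mathlib

open Real MeasureTheory

private lemma cosh_sub_integral (a b : ℝ) :
    Real.cosh b - Real.cosh a = ∫ t in a..b, Real.sinh t :=
  (intervalIntegral.integral_eq_sub_of_hasDerivAt
    (fun t _ => Real.hasDerivAt_cosh t)
    (Real.continuous_sinh.intervalIntegrable a b)).symm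

private lemma cosh_sub_le {a b : ℝ} (hab : a ≤ b) :
    Real.cosh b - Real.cosh a ≤ (b - a) * Real.sinh b := by
  rw [cosh_sub_integral]
  have h := intervalIntegral.integral_mono_on (μ := volume) hab
    (Real.continuous_sinh.intervalIntegrable a b) (intervalIntegrable_const (c := Real.sinh b))
    (fun x hx => Real.sinh_le_sinh.2 hx.2)
  simpa [smul_eq_mul, mul_comm] using h

private lemma le_cosh_sub {a b : ℝ} (hab : a ≤ b) :
    (b - a) * Real.sinh a ≤ Real.cosh b - Real.cosh a := by
  rw [cosh_sub_integral]
  have h := intervalIntegral.integral_mono_on (μ := volume) hab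
    (intervalIntegrable_const (c := Real.sinh a)) (Real.continuous_sinh.intervalIntegrable a b)
    (fun x hx => Real.sinh_le_sinh.2 hx.1)
  simpa [smul_eq_mul, mul_comm] using h

private lemma cosh_convex_bound {a b : ℝ} (h0 : 0 ≤ a) (hab : a ≤ b) :
    (b - a) * (Real.cosh b - 1) ≤ b * (Real.cosh b - Real.cosh a) := by
  have h1 : Real.cosh a - 1 ≤ a * Real.sinh a := by
    simpa using cosh_sub_le h0
  have h2 : (b - a) * Real.sinh a ≤ Real.cosh b - Real.cosh a := le_cosh_sub hab
  nlinarith [mul_le_mul_of_nonneg_left h1 (sub_nonneg.2 hab),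
    mul_le_mul_of_nonneg_left h2 h0]

private lemma inv_sqrt_eq_rpow {y : ℝ} (hy : 0 ≤ y) :
    (Real.sqrt y)⁻¹ = y ^ (-(1/2) : ℝ) := by
  rw [Real.rpow_neg hy, Real.sqrt_eq_rpow]

private lemma spherical_integrand_integrable {r s' : ℝ} (hr : 1 ≤ r) (hs0 : 0 ≤ s')
    (hs1 : s' ≤ 1 / 2) :
    IntervalIntegrable
      (fun x => Real.exp (s' * r * x) / Real.sqrt (Real.cosh r - Real.cosh (r * x)))
      volume (-1) 1 := by
  have hr0 : (0:ℝ) < r := lt_of_lt_of_le one_pos hr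
  have hc1 : (1:ℝ) < Real.cosh r := Real.one_lt_cosh.2 (ne_of_gt hr0)
  set C : ℝ := Real.exp (r / 2) / Real.sqrt (Real.cosh r - 1) with hC
  have hC0 : 0 ≤ C := div_nonneg (Real.exp_pos _).le (Real.sqrt_nonneg _)
  have h1 : IntervalIntegrable (fun x : ℝ => x ^ (-(1/2) : ℝ)) volume 0 2 :=
    intervalIntegral.intervalIntegrable_rpow' (by norm_num)
  have h2 : IntervalIntegrable (fun x : ℝ => (1 - x) ^ (-(1/2) : ℝ)) volume (-1) 1 := by
    have := (h1.comp_sub_left 1).symm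
    norm_num at this
    exact this
  have h3 : IntervalIntegrable (fun x : ℝ => (1 + x) ^ (-(1/2) : ℝ)) volume (-1) 1 := by
    have := h1.comp_add_left 1
    norm_num at this
    exact this
  have hg : IntervalIntegrable
      (fun x : ℝ => C * ((1 - x) ^ (-(1/2) : ℝ) + (1 + x) ^ (-(1/2) : ℝ))) volume (-1) 1 :=
    (h2.add h3).const_mul C
  apply hg.mono_fun'
  · apply Measurable.aestronglyMeasurable
    apply Measurable.div
    · exact (Real.continuous_exp.comp (continuous_const.mul continuous_id)).measurable
    · exact (Real.continuous_sqrt.comp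
        (continuous_const.sub (Real.continuous_cosh.comp
          (continuous_const.mul continuous_id)))).measurable
  · rw [Set.uIoc_of_le (by norm_num : (-1:ℝ) ≤ 1)]
    refine (ae_restrict_iff' measurableSet_Ioc).2 (Filter.Eventually.of_forall ?_)
    rintro x ⟨hx1, hx2⟩
    have habs : |x| ≤ 1 := abs_le.2 ⟨hx1.le, hx2⟩
    simp only [Real.norm_eq_abs,
      abs_of_nonneg (div_nonneg (Real.exp_pos _).le (Real.sqrt_nonneg _))]
    have hnum : Real.exp (s' * r * x) ≤ Real.exp (r / 2) := by
      apply Real.exp_le_exp.2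
      nlinarith [mul_le_mul_of_nonneg_left hx2 (mul_nonneg hs0 hr0.le)]
    have hcc : Real.cosh (r * |x|) = Real.cosh (r * x) := by
      rw [← Real.cosh_abs (r * x), abs_mul, abs_of_pos hr0]
    have hDlow : (1 - |x|) * (Real.cosh r - 1) ≤ Real.cosh r - Real.cosh (r * x) := by
      have h := cosh_convex_bound (a := r * |x|) (b := r)
        (mul_nonneg hr0.le (abs_nonneg x)) (by nlinarith [abs_nonneg x])
      rw [hcc] at h
      nlinarith [h]
    rcases eq_or_lt_of_le hx2 with hx2' | hx2'
    · subst hx2'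
      rw [show r * (1:ℝ) = r from mul_one r, sub_self, Real.sqrt_zero, div_zero]
      have hp1 : (0:ℝ) ≤ ((0:ℝ)) ^ (-(1/2) : ℝ) := Real.rpow_nonneg le_rfl _
      have hp2 : (0:ℝ) ≤ ((1:ℝ) + 1) ^ (-(1/2) : ℝ) := Real.rpow_nonneg (by norm_num) _
      exact mul_nonneg hC0 (by linarith)
    · have habs' : |x| < 1 := abs_lt.2 ⟨hx1, hx2'⟩
      have hpos : 0 < (1 - |x|) * (Real.cosh r - 1) :=
        mul_pos (by linarith) (by linarith)
      calc Real.exp (s' * r * x) / Real.sqrt (Real.cosh r - Real.cosh (r * x))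
          ≤ Real.exp (r / 2) / Real.sqrt ((1 - |x|) * (Real.cosh r - 1)) :=
            div_le_div₀ (Real.exp_pos _).le hnum (Real.sqrt_pos.2 hpos)
              (Real.sqrt_le_sqrt hDlow)
        _ = C * (1 - |x|) ^ (-(1/2) : ℝ) := by
            rw [Real.sqrt_mul (by linarith : (0:ℝ) ≤ 1 - |x|),
              ← inv_sqrt_eq_rpow (by linarith : (0:ℝ) ≤ 1 - |x|), hC]
            have hn1 : Real.sqrt (1 - |x|) ≠ 0 := ne_of_gt (Real.sqrt_pos.2 (by linarith))
            have hn2 : Real.sqrt (Real.cosh r - 1) ≠ 0 := ne_of_gt (Real.sqrt_pos.2 (by linarith))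
            field_simp
        _ ≤ C * ((1 - x) ^ (-(1/2) : ℝ) + (1 + x) ^ (-(1/2) : ℝ)) := by
            apply mul_le_mul_of_nonneg_left _ hC0
            rcases le_or_gt 0 x with h | h
            · rw [abs_of_nonneg h]
              have : (0:ℝ) ≤ (1 + x) ^ (-(1/2) : ℝ) := Real.rpow_nonneg (by linarith) _
              linarith
            · rw [abs_of_neg h, sub_neg_eq_add]
              have : (0:ℝ) ≤ (1 - x) ^ (-(1/2) : ℝ) := Real.rpow_nonneg (by linarith) _
              linarith

/-- Lower bound on the complementary-series spherical function: there is an absolute `c > 0`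
such that for all `ε ∈ (0,1]`, `r ≥ 1`, `s′ ∈ [0,1/2]`,
`(1/(√2·π)) · r · ∫_{−1}^{1} e^{s′·r·x}/√(cosh r − cosh(r·x)) dx ≥ c·√ε·e^{−r·(1/2 − s′(1−ε))}`. -/
theorem spherical_function_complementary_lower_bound :
    ∃ c : ℝ, 0 < c ∧ ∀ ε : ℝ, ε ∈ Set.Ioc (0:ℝ) 1 → ∀ r : ℝ, 1 ≤ r →
      ∀ s' : ℝ, s' ∈ Set.Icc (0:ℝ) (1 / 2) →
        c * Real.sqrt ε * Real.exp (-r * (1 / 2 - s' * (1 - ε))) ≤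
          (1 / (Real.sqrt 2 * π)) * r *
            ∫ x in (-1:ℝ)..1,
              Real.exp (s' * r * x) / Real.sqrt (Real.cosh r - Real.cosh (r * x)) := by
  have hπ := Real.pi_pos
  refine ⟨1 / (2 * π), by positivity, ?_⟩
  rintro ε ⟨hε0, hε1⟩ r hr s' ⟨hs0, hs1⟩
  have hr0 : (0:ℝ) < r := lt_of_lt_of_le one_pos hr
  set f : ℝ → ℝ :=
    fun x => Real.exp (s' * r * x) / Real.sqrt (Real.cosh r - Real.cosh (r * x)) with hf
  have hfi : IntervalIntegrable f volume (-1) 1 :=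
    spherical_integrand_integrable hr hs0 hs1
  have hf0 : ∀ x, 0 ≤ f x := fun x => div_nonneg (Real.exp_pos _).le (Real.sqrt_nonneg _)
  set X : ℝ := Real.sqrt (r * ε / 2) with hX
  have hX0 : 0 < X := Real.sqrt_pos.2 (by positivity)
  set P : ℝ := Real.exp (r / 2) with hP
  have hP0 : 0 < P := Real.exp_pos _
  set E : ℝ := Real.exp (s' * r * (1 - ε)) with hE
  have hE0 : 0 < E := Real.exp_pos _
  set m : ℝ := E / (X * P) with hm
  -- pointwise lower bound on [1-ε, 1-ε/2]
  have hsinh : Real.sinh r ≤ Real.exp r / 2 := by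
    rw [Real.sinh_eq]
    have := Real.exp_pos (-r)
    linarith
  have hse : Real.sqrt (Real.exp r) = P := by
    rw [show Real.exp r = P ^ 2 by rw [hP, sq, ← Real.exp_add]; ring_nf]
    exact Real.sqrt_sq hP0.le
  have hmf : ∀ x ∈ Set.Icc (1 - ε) (1 - ε/2), m ≤ f x := by
    intro x hx
    obtain ⟨hxa, hxb⟩ := hx
    have hx0 : 0 ≤ x := by linarith
    have hx1 : x < 1 := by linarith
    have hD : 0 < Real.cosh r - Real.cosh (r * x) := by
      rw [sub_pos]
      apply Real.cosh_lt_cosh.2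
      rw [abs_of_nonneg (mul_nonneg hr0.le hx0), abs_of_pos hr0]
      nlinarith
    have hDub : Real.sqrt (Real.cosh r - Real.cosh (r * x)) ≤ X * P := by
      have h1 : Real.cosh r - Real.cosh (r * x) ≤ (r - r * x) * Real.sinh r :=
        cosh_sub_le (by nlinarith)
      have h2 : Real.cosh r - Real.cosh (r * x) ≤ (r * ε / 2) * Real.exp r := by
        have hsr : (0:ℝ) ≤ Real.sinh r := Real.sinh_nonneg_iff.2 hr0.le
        have h3 : (r - r * x) * Real.sinh r ≤ (r * ε) * (Real.exp r / 2) :=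
          mul_le_mul (by nlinarith) hsinh hsr (by positivity)
        nlinarith
      calc Real.sqrt (Real.cosh r - Real.cosh (r * x))
          ≤ Real.sqrt ((r * ε / 2) * Real.exp r) := Real.sqrt_le_sqrt h2
        _ = X * P := by rw [Real.sqrt_mul (by positivity), hse]
    have hnum : E ≤ Real.exp (s' * r * x) :=
      Real.exp_le_exp.2 (by nlinarith [mul_nonneg hs0 hr0.le])
    exact div_le_div₀ (Real.exp_pos _).le hnum (Real.sqrt_pos.2 hD) hDub
  -- integral bounds
  have hI1 : m * (ε / 2) ≤ ∫ x in (1 - ε)..(1 - ε/2), f x := by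
    have hab : (1:ℝ) - ε ≤ 1 - ε/2 := by linarith
    have hsub : Set.uIcc (1 - ε) (1 - ε/2) ⊆ Set.uIcc (-1:ℝ) 1 := by
      rw [Set.uIcc_of_le hab, Set.uIcc_of_le (by norm_num : (-1:ℝ) ≤ 1)]
      exact Set.Icc_subset_Icc (by linarith) (by linarith)
    have h := intervalIntegral.integral_mono_on (μ := volume) hab
      (intervalIntegrable_const (c := m)) (hfi.mono_set hsub) hmf
    rw [intervalIntegral.integral_const, smul_eq_mul] at h
    calc m * (ε / 2) = (1 - ε/2 - (1 - ε)) * m := by ring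
      _ ≤ _ := h
  have hI2 : ∫ x in (1 - ε)..(1 - ε/2), f x ≤ ∫ x in (-1:ℝ)..1, f x :=
    intervalIntegral.integral_mono_interval (by linarith) (by linarith) (by linarith)
      (Filter.Eventually.of_forall fun x => hf0 x) hfi
  -- final arithmetic
  have hexp : Real.exp (-r * (1 / 2 - s' * (1 - ε))) = E / P := by
    rw [eq_div_iff (ne_of_gt hP0), hE, hP, ← Real.exp_add]
    congr 1; ring
  have hkey : X * Real.sqrt ε * Real.sqrt 2 ≤ r * ε := by
    have e : X * Real.sqrt ε * Real.sqrt 2 = ε * Real.sqrt r := by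
      rw [hX, ← Real.sqrt_mul (by positivity), ← Real.sqrt_mul (by positivity),
        show r * ε / 2 * ε * 2 = ε ^ 2 * r by ring, Real.sqrt_mul (sq_nonneg ε),
        Real.sqrt_sq hε0.le]
    have hsr : Real.sqrt r ≤ r := by
      nlinarith [Real.sq_sqrt hr0.le, Real.sqrt_nonneg r,
        show (1:ℝ) ≤ Real.sqrt r by
          rw [show (1:ℝ) = Real.sqrt 1 by simp]
          exact Real.sqrt_le_sqrt hr]
    rw [e]
    nlinarith
  have h2pos : (0:ℝ) < Real.sqrt 2 := Real.sqrt_pos.2 (by norm_num)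
  set d : ℝ := E / (2 * Real.sqrt 2 * π * X * P) with hd
  have hd0 : 0 ≤ d := by positivity
  have e1 : 1 / (2 * π) * Real.sqrt ε * (E / P) = (X * Real.sqrt ε * Real.sqrt 2) * d := by
    rw [hd]
    field_simp
  have e2 : 1 / (Real.sqrt 2 * π) * r * (m * (ε / 2)) = (r * ε) * d := by
    rw [hd, hm]
    field_simp
  calc 1 / (2 * π) * Real.sqrt ε * Real.exp (-r * (1 / 2 - s' * (1 - ε)))
      = (X * Real.sqrt ε * Real.sqrt 2) * d := by rw [hexp, e1]
    _ ≤ (r * ε) * d := mul_le_mul_of_nonneg_right hkey hd0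
    _ = 1 / (Real.sqrt 2 * π) * r * (m * (ε / 2)) := e2.symm
    _ ≤ 1 / (Real.sqrt 2 * π) * r * ∫ x in (-1:ℝ)..1, f x := by
        apply mul_le_mul_of_nonneg_left (le_trans hI1 hI2) (by positivity)
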